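/- If C ⊂ ℍ^d is a complete body of diameter δ, then for every boundary point p of C there exists a point p′ ∈ C with dist(p, p′) = δ. -/

import Mathlib

noncomputable section

namespace HypSpace

/-- Inverse hyperbolic cosine. -/
def arcosh (x : ℝ) : ℝ := Real.log (x + Real.sqrt (x ^ 2 - 1))

/-- The Minkowski bilinear form on `ℝ^{d+1}` (signature `(d,1)`, the last
coordinate being timelike). -/
def mink (d : ℕ) (x y : EuclideanSpace ℝ (Fin (d + 1))) : ℝ :=
  (∑ i : Fin d, x i.castSucc * y i.castSucc) - x (Fin.last d) * y (Fin.last d)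

/-- The hyperboloid model of `d`-dimensional hyperbolic space: the upper sheet
of the two-sheeted hyperboloid `mink x x = -1`. -/
def Pt (d : ℕ) : Type := {x : EuclideanSpace ℝ (Fin (d + 1)) // mink d x x = -1 ∧ 0 < x (Fin.last d)}

variable {d : ℕ}

/-- Hyperbolic distance between two points of `ℍ^d`. -/
def hdist (p q : Pt d) : ℝ := arcosh (-(mink d p.1 q.1))

/-- The geodesic segment between `a` and `b`, described metrically via betweenness
(hyperbolic space is uniquely geodesic). -/
def seg (a b : Pt d) : Set (Pt d) := {p | hdist a p + hdist p b = hdist a b}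

/-- A set is (geodesically) convex if it contains the segment between any two of its points. -/
def IsConvexSet (C : Set (Pt d)) : Prop := ∀ a ∈ C, ∀ b ∈ C, seg a b ⊆ C

/-- The convex hull: the smallest convex set containing `A`. -/
def chull (A : Set (Pt d)) : Set (Pt d) := ⋂₀ {C | IsConvexSet C ∧ A ⊆ C}

/-- The totally geodesic hyperplane with (spacelike) normal vector `v`. -/
def plane (v : EuclideanSpace ℝ (Fin (d + 1))) : Set (Pt d) := {p | mink d v p.1 = 0}

/-- A hyperplane of `ℍ^d`: the trace on the hyperboloid of a linear hyperplane
with spacelike unit normal. -/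
def IsHyperplane (H : Set (Pt d)) : Prop := ∃ v, mink d v v = 1 ∧ H = plane v

/-- Distance from a point to a set. -/
def distPS (p : Pt d) (S : Set (Pt d)) : ℝ := sInf (hdist p '' S)

/-- Distance between two sets. -/
def distSS (A B : Set (Pt d)) : ℝ := sInf {r | ∃ a ∈ A, ∃ b ∈ B, hdist a b = r}

/-- `h` is the orthogonal projection of `g` onto `H`: the point of `H`
realizing the distance from `g` to `H`.  For a hyperplane `H` with `a ∈ H`,
`IsProj b H a` also expresses that `H` is orthogonal to the segment `ab` at `a`. -/
def IsProj (g : Pt d) (H : Set (Pt d)) (h : Pt d) : Prop :=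
  h ∈ H ∧ ∀ k ∈ H, hdist g h ≤ hdist g k

/-- Two hyperplanes are ultraparallel if they are disjoint and not asymptotically
parallel (their distance is positive, i.e. they admit a common perpendicular). -/
def Ultraparallel (H J : Set (Pt d)) : Prop :=
  IsHyperplane H ∧ IsHyperplane J ∧ H ∩ J = ∅ ∧ 0 < distSS H J

/-- `p` is an interior point of `C`. -/
def IsIntr (C : Set (Pt d)) (p : Pt d) : Prop := ∃ ε > 0, ∀ q, hdist p q < ε → q ∈ C

/-- `p` is a boundary point of the (closed) set `C`. -/
def IsBdry (C : Set (Pt d)) (p : Pt d) : Prop := p ∈ C ∧ ¬ IsIntr C p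

/-- `C` is bounded. -/
def IsBddSet (C : Set (Pt d)) : Prop := ∃ R, ∀ a ∈ C, ∀ b ∈ C, hdist a b ≤ R

/-- `C` is closed. -/
def IsClosedSet (C : Set (Pt d)) : Prop :=
  ∀ p : Pt d, (∀ ε > 0, ∃ q ∈ C, hdist p q < ε) → p ∈ C

/-- A convex body: a compact (closed and bounded) convex set with nonempty interior. -/
def IsBody (C : Set (Pt d)) : Prop :=
  IsConvexSet C ∧ IsBddSet C ∧ IsClosedSet C ∧ ∃ p, IsIntr C p

/-- The hyperplane `H` supports `C`: it meets `C` but misses its interior. -/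
def Supports (H C : Set (Pt d)) : Prop :=
  IsHyperplane H ∧ (H ∩ C).Nonempty ∧ ∀ p, IsIntr C p → p ∉ H

/-- The width of `C` determined by `H`, as the maximum distance from `H`
to a point of `C`. -/
def width (H C : Set (Pt d)) : ℝ := sSup ((fun c => distPS c H) '' C)

/-- The width of `C` determined by `H`, as the distance from `H` to a farthest
supporting hyperplane of `C` ultraparallel to `H`. -/
def widthUP (H C : Set (Pt d)) : ℝ :=
  sSup {r | ∃ J, Supports J C ∧ Ultraparallel H J ∧ distSS H J = r}

/-- The thickness of `C`: the minimum width over supporting hyperplanes. -/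
def thickness (C : Set (Pt d)) : ℝ := sInf {r | ∃ H, Supports H C ∧ width H C = r}

/-- The diameter of `C`. -/
def diam (C : Set (Pt d)) : ℝ := sSup {r | ∃ a ∈ C, ∃ b ∈ C, hdist a b = r}

/-- A body of constant width `δ`. -/
def ConstWidth (W : Set (Pt d)) (δ : ℝ) : Prop :=
  IsBody W ∧ ∀ H, Supports H W → width H W = δ

/-- A complete set of diameter `δ`. -/
def CompleteSet (C : Set (Pt d)) (δ : ℝ) : Prop :=
  diam C = δ ∧ ∀ x, x ∉ C → diam (C ∪ {x}) > δ

/-- A body of constant diameter `δ`. -/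
def ConstDiam (C : Set (Pt d)) (δ : ℝ) : Prop :=
  diam C = δ ∧ ∀ p, IsBdry C p → ∃ p' ∈ C, hdist p p' = δ



/-! ### Auxiliary lemmas -/

section Aux

lemma sqrt_arg_pos {x : ℝ} (hx : 1 ≤ x) : 0 < x + Real.sqrt (x ^ 2 - 1) :=
  lt_of_lt_of_le one_pos (le_add_of_le_of_nonneg hx (Real.sqrt_nonneg _))

lemma arcosh_one : arcosh 1 = 0 := by simp [arcosh]

lemma arcosh_nonneg {x : ℝ} (hx : 1 ≤ x) : 0 ≤ arcosh x :=
  Real.log_nonneg (le_add_of_le_of_nonneg hx (Real.sqrt_nonneg _))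

lemma arcosh_le_arcosh {x y : ℝ} (hx : 1 ≤ x) (hxy : x ≤ y) : arcosh x ≤ arcosh y := by
  apply Real.log_le_log (sqrt_arg_pos hx)
  have : Real.sqrt (x ^ 2 - 1) ≤ Real.sqrt (y ^ 2 - 1) := by
    apply Real.sqrt_le_sqrt; nlinarith
  linarith

lemma sqrt_arg_inv {x : ℝ} (hx : 1 ≤ x) :
    (x + Real.sqrt (x ^ 2 - 1))⁻¹ = x - Real.sqrt (x ^ 2 - 1) := by
  have h1 : (0:ℝ) ≤ x ^ 2 - 1 := by nlinarith
  have hs : Real.sqrt (x ^ 2 - 1) ^ 2 = x ^ 2 - 1 := Real.sq_sqrt h1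
  apply inv_eq_of_mul_eq_one_right
  nlinarith [hs]

lemma cosh_arcosh {x : ℝ} (hx : 1 ≤ x) : Real.cosh (arcosh x) = x := by
  have hpos := sqrt_arg_pos hx
  rw [arcosh, Real.cosh_eq, Real.exp_log hpos, Real.exp_neg, Real.exp_log hpos,
    sqrt_arg_inv hx]
  ring

lemma sinh_arcosh {x : ℝ} (hx : 1 ≤ x) : Real.sinh (arcosh x) = Real.sqrt (x ^ 2 - 1) := by
  have hpos := sqrt_arg_pos hx
  rw [arcosh, Real.sinh_eq, Real.exp_log hpos, Real.exp_neg, Real.exp_log hpos,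
    sqrt_arg_inv hx]
  ring

lemma arcosh_cosh {x : ℝ} (hx : 0 ≤ x) : arcosh (Real.cosh x) = x := by
  have h1 : Real.cosh x ^ 2 - 1 = Real.sinh x ^ 2 := by
    have := Real.cosh_sq_sub_sinh_sq x; linarith
  rw [arcosh, h1, Real.sqrt_sq (Real.sinh_nonneg_iff.mpr hx), Real.cosh_add_sinh,
    Real.log_exp]

lemma continuousAt_arcosh {x : ℝ} (hx : 1 ≤ x) : ContinuousAt arcosh x := by
  have hg : Continuous fun y : ℝ => y + Real.sqrt (y ^ 2 - 1) := by continuity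
  unfold arcosh
  exact hg.continuousAt.log (ne_of_gt (sqrt_arg_pos hx))

/-! ### The Minkowski form -/

lemma mink_comm (x y : EuclideanSpace ℝ (Fin (d + 1))) : mink d x y = mink d y x := by
  unfold mink
  congr 1
  · exact Finset.sum_congr rfl fun i _ => mul_comm _ _
  · ring

lemma mink_add_right (x y z : EuclideanSpace ℝ (Fin (d + 1))) :
    mink d x (y + z) = mink d x y + mink d x z := by
  unfold mink
  simp only [PiLp.add_apply, mul_add, Finset.sum_add_distrib]
  ring

lemma mink_smul_right (c : ℝ) (x y : EuclideanSpace ℝ (Fin (d + 1))) :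
    mink d x (c • y) = c * mink d x y := by
  unfold mink
  simp only [PiLp.smul_apply, smul_eq_mul, mul_sub, Finset.mul_sum]
  congr 1
  · exact Finset.sum_congr rfl fun i _ => by ring
  · ring

lemma mink_sub_right (x y z : EuclideanSpace ℝ (Fin (d + 1))) :
    mink d x (y - z) = mink d x y - mink d x z := by
  unfold mink
  simp only [PiLp.sub_apply, mul_sub, Finset.sum_sub_distrib]
  ring

lemma mink_sub_smul (x y z w : EuclideanSpace ℝ (Fin (d + 1))) (s t : ℝ) :
    mink d (x - s • y) (z - t • w) =
      mink d x z - t * mink d x w - s * mink d y z + s * t * mink d y w := by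
  rw [mink_comm, mink_sub_right, mink_smul_right,
    mink_comm (d := d) (z - t • w) x, mink_comm (d := d) (z - t • w) y,
    mink_sub_right, mink_smul_right, mink_sub_right, mink_smul_right]
  ring

lemma spatial_cs (x y : EuclideanSpace ℝ (Fin (d + 1))) :
    (∑ i : Fin d, x i.castSucc * y i.castSucc) ^ 2 ≤
      (∑ i : Fin d, x i.castSucc ^ 2) * (∑ i : Fin d, y i.castSucc ^ 2) :=
  Finset.sum_mul_sq_le_sq_mul_sq Finset.univ _ _

lemma spatial_eq {x : EuclideanSpace ℝ (Fin (d + 1))} (hx : mink d x x = -1) :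
    (∑ i : Fin d, x i.castSucc ^ 2) = x (Fin.last d) ^ 2 - 1 := by
  unfold mink at hx
  have h : ∀ i : Fin d, x i.castSucc * x i.castSucc = x i.castSucc ^ 2 := fun i => (sq _).symm
  rw [Finset.sum_congr rfl fun i _ => h i] at hx
  nlinarith [hx]

lemma spatial_nonneg (x : EuclideanSpace ℝ (Fin (d + 1))) :
    0 ≤ ∑ i : Fin d, x i.castSucc ^ 2 :=
  Finset.sum_nonneg fun i _ => sq_nonneg _

lemma last_ge_one {x : EuclideanSpace ℝ (Fin (d + 1))} (hx : mink d x x = -1)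
    (ht : 0 < x (Fin.last d)) : 1 ≤ x (Fin.last d) := by
  have h1 := spatial_eq hx
  have h2 := spatial_nonneg x
  nlinarith

lemma aux_cs1 (P a b : ℝ) (h : P^2 ≤ (a^2-1)*(b^2-1)) (ha : 1 ≤ a) (hb : 1 ≤ b) :
    P ≤ a*b - 1 := by
  have hab : 0 ≤ a*b - 1 := by nlinarith
  by_contra hlt
  push_neg at hlt
  have h1 : 0 < P - (a*b-1) := by linarith
  have h2 : 0 < P + (a*b-1) := by linarith
  have := mul_pos h1 h2
  nlinarith [sq_nonneg (a-b)]

lemma aux_cs2 (T W S : ℝ) (h : (T*W)^2 ≤ (T^2-1)*S) (hT : 1 ≤ T) (hS : 0 ≤ S) :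
    0 ≤ S - W^2 := by
  by_contra hlt
  push_neg at hlt
  have hT2 : 0 < T^2 := by nlinarith
  have := mul_pos hT2 (by linarith : 0 < W^2 - S)
  nlinarith

lemma one_le_neg_mink {x y : EuclideanSpace ℝ (Fin (d + 1))} (hx : mink d x x = -1)
    (htx : 0 < x (Fin.last d)) (hy : mink d y y = -1) (hty : 0 < y (Fin.last d)) :
    1 ≤ -(mink d x y) := by
  have hcs := spatial_cs x y
  rw [spatial_eq hx, spatial_eq hy] at hcs
  have h1 := last_ge_one hx htx
  have h2 := last_ge_one hy hty
  have key := aux_cs1 _ _ _ hcs h1 h2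
  unfold mink
  linarith

lemma spacelike_of_orth {b w : EuclideanSpace ℝ (Fin (d + 1))} (hb : mink d b b = -1)
    (htb : 0 < b (Fin.last d)) (horth : mink d b w = 0) : 0 ≤ mink d w w := by
  have hcs := spatial_cs b w
  rw [spatial_eq hb] at hcs
  have h1 := last_ge_one hb htb
  have h2 := spatial_nonneg w
  unfold mink at horth ⊢
  have hsq : ∀ i : Fin d, w i.castSucc * w i.castSucc = w i.castSucc ^ 2 := fun i => (sq _).symm
  rw [Finset.sum_congr rfl fun i _ => hsq i]
  have hP : (∑ i : Fin d, b i.castSucc * w i.castSucc) = b (Fin.last d) * w (Fin.last d) := by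
    linarith
  rw [hP] at hcs
  have key := aux_cs2 _ _ _ hcs h1 h2
  nlinarith [key]

lemma cs_orth {b u v : EuclideanSpace ℝ (Fin (d + 1))} (hb : mink d b b = -1)
    (htb : 0 < b (Fin.last d)) (hu : mink d b u = 0) (hv : mink d b v = 0) :
    (mink d u v) ^ 2 ≤ mink d u u * mink d v v := by
  have key : ∀ t : ℝ, 0 ≤ mink d v v * (t * t) + (2 * mink d u v) * t + mink d u u := by
    intro t
    have horth : mink d b (u + t • v) = 0 := by
      rw [mink_add_right, mink_smul_right, hu, hv]; ring
    have h0 := spacelike_of_orth hb htb horth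
    have hexp : mink d (u + t • v) (u + t • v) =
        mink d v v * (t * t) + (2 * mink d u v) * t + mink d u u := by
      have e1 : u + t • v = u - (-t) • v := by
        rw [neg_smul, sub_neg_eq_add]
      rw [e1, mink_sub_smul u v u v (-t) (-t), mink_comm (d := d) v u]
      ring
    linarith [hexp ▸ h0]
  have hd := discrim_le_zero key
  rw [discrim] at hd
  nlinarith [hd]

/-! ### Basic properties of `hdist` -/

lemma one_le_neg_mink' (p q : Pt d) : 1 ≤ -(mink d p.1 q.1) :=
  one_le_neg_mink p.2.1 p.2.2 q.2.1 q.2.2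

lemma hdist_nonneg (p q : Pt d) : 0 ≤ hdist p q :=
  arcosh_nonneg (one_le_neg_mink' p q)

lemma hdist_comm (p q : Pt d) : hdist p q = hdist q p := by
  unfold hdist; rw [mink_comm]

lemma hdist_self (p : Pt d) : hdist p p = 0 := by
  unfold hdist
  rw [p.2.1]
  norm_num [arcosh_one]

lemma hdist_triangle (a b c : Pt d) : hdist a c ≤ hdist a b + hdist b c := by
  set A := a.1 with hA
  set B := b.1 with hB
  set Cc := c.1 with hCc
  set al := -(mink d A B) with hal
  set be := -(mink d B Cc) with hbe
  set ga := -(mink d A Cc) with hga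
  have h1 : 1 ≤ al := one_le_neg_mink' a b
  have h2 : 1 ≤ be := one_le_neg_mink' b c
  have h3 : 1 ≤ ga := one_le_neg_mink' a c
  set u := A - al • B with hu
  set v := Cc - be • B with hv
  have hbu : mink d B u = 0 := by
    rw [hu, mink_sub_right, mink_smul_right, b.2.1, mink_comm (d := d) B A]
    simp [hal]
  have hbv : mink d B v = 0 := by
    rw [hv, mink_sub_right, mink_smul_right, b.2.1]
    simp [hbe]
  have huu : mink d u u = al ^ 2 - 1 := by
    rw [hu, mink_sub_smul, a.2.1, b.2.1, mink_comm (d := d) B A]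
    have : mink d A B = -al := by rw [hal]; ring
    rw [this]; ring
  have hvv : mink d v v = be ^ 2 - 1 := by
    rw [hv, mink_sub_smul, c.2.1, b.2.1, mink_comm (d := d) B Cc]
    have : mink d Cc B = -be := by rw [hbe, mink_comm]; ring
    rw [this]; ring
  have huv : mink d u v = al * be - ga := by
    rw [hu, hv, mink_sub_smul, b.2.1]
    have e1 : mink d A B = -al := by rw [hal]; ring
    have e2 : mink d B Cc = -be := by rw [hbe]; ring
    have e3 : mink d A Cc = -ga := by rw [hga]; ring
    rw [e1, e2, e3]; ring
  have hcs := cs_orth b.2.1 b.2.2 hbu hbv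
  rw [huu, hvv, huv] at hcs
  -- `ga ≤ al*be + sqrt((al²-1)(be²-1))`
  have hsq : al * be - ga ≥ -Real.sqrt ((al ^ 2 - 1) * (be ^ 2 - 1)) := by
    have habs : |al * be - ga| ≤ Real.sqrt ((al ^ 2 - 1) * (be ^ 2 - 1)) :=
      Real.abs_le_sqrt hcs
    have := abs_le.mp habs
    linarith [this.1]
  have hkey : ga ≤ al * be + Real.sqrt (al ^ 2 - 1) * Real.sqrt (be ^ 2 - 1) := by
    rw [← Real.sqrt_mul (by nlinarith : (0:ℝ) ≤ al ^ 2 - 1)]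
    linarith
  have hda : hdist a b = arcosh al := rfl
  have hdb : hdist b c = arcosh be := rfl
  have hdc : hdist a c = arcosh ga := rfl
  have hcosh : Real.cosh (hdist a b + hdist b c) =
      al * be + Real.sqrt (al ^ 2 - 1) * Real.sqrt (be ^ 2 - 1) := by
    rw [Real.cosh_add, hda, hdb, cosh_arcosh h1, cosh_arcosh h2,
      sinh_arcosh h1, sinh_arcosh h2]
  rw [hdc]
  calc arcosh ga ≤ arcosh (Real.cosh (hdist a b + hdist b c)) := by
        apply arcosh_le_arcosh h3
        rw [hcosh]; exact hkey
    _ = hdist a b + hdist b c := arcosh_cosh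
        (add_nonneg (hdist_nonneg a b) (hdist_nonneg b c))

end Aux


/-! ### More auxiliary lemmas for compactness -/

section Aux2

lemma last_coord_bound {x y : EuclideanSpace ℝ (Fin (d + 1))} (hx : mink d x x = -1)
    (htx : 0 < x (Fin.last d)) (hy : mink d y y = -1) (hty : 0 < y (Fin.last d)) :
    y (Fin.last d) ≤
      (x (Fin.last d) + Real.sqrt (x (Fin.last d) ^ 2 - 1)) * (-(mink d x y)) := by
  have ha : 1 ≤ x (Fin.last d) := last_ge_one hx htx
  have hb : 1 ≤ y (Fin.last d) := last_ge_one hy hty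
  set a := x (Fin.last d)
  set b := y (Fin.last d)
  set s := Real.sqrt (a ^ 2 - 1) with hs
  have hs0 : 0 ≤ s := Real.sqrt_nonneg _
  have hs2 : s ^ 2 = a ^ 2 - 1 := Real.sq_sqrt (by nlinarith)
  have hcs := spatial_cs x y
  rw [spatial_eq hx, spatial_eq hy] at hcs
  set P := ∑ i : Fin d, x i.castSucc * y i.castSucc with hPdef
  have hP : P ≤ s * b := by
    by_contra hlt
    push_neg at hlt
    have hsb : 0 ≤ s * b := mul_nonneg hs0 (by linarith)
    have h1 : 0 < P - s * b := by linarith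
    have h2 : 0 < P + s * b := by linarith
    have := mul_pos h1 h2
    nlinarith [hcs, hs2, sq_nonneg s, sq_nonneg b]
  have hmink : -(mink d x y) = a * b - P := by
    unfold mink; simp only [hPdef, a, b]; ring
  rw [hmink]
  have expand : (a + s) * (a * b - P) = (a ^ 2 - s ^ 2) * b + (a + s) * (s * b - P) := by ring
  have key1 : 0 ≤ (a + s) * (s * b - P) := mul_nonneg (by linarith) (by linarith)
  rw [expand, hs2]
  nlinarith

lemma mink_continuous_pair :
    Continuous fun q : EuclideanSpace ℝ (Fin (d + 1)) × EuclideanSpace ℝ (Fin (d + 1)) =>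
      mink d q.1 q.2 := by
  unfold mink
  apply Continuous.sub
  · apply continuous_finset_sum
    intro i _
    exact ((PiLp.continuous_apply _ _ _).comp continuous_fst).mul ((PiLp.continuous_apply _ _ _).comp continuous_snd)
  · exact ((PiLp.continuous_apply _ _ _).comp continuous_fst).mul ((PiLp.continuous_apply _ _ _).comp continuous_snd)

lemma mink_continuous_right (a : EuclideanSpace ℝ (Fin (d + 1))) :
    Continuous fun y : EuclideanSpace ℝ (Fin (d + 1)) => mink d a y :=
  mink_continuous_pair.comp (continuous_const.prodMk continuous_id)

lemma mink_continuous_diag :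
    Continuous fun y : EuclideanSpace ℝ (Fin (d + 1)) => mink d y y :=
  mink_continuous_pair.comp (continuous_id.prodMk continuous_id)

end Aux2

/-- Proposition 5: in a complete body of diameter `δ`, every
boundary point is an endpoint of a diameter. -/
theorem complete_boundary_has_diameter {d : ℕ} (C : Set (Pt d)) (δ : ℝ)
    (hC : IsBody C) (hcomp : CompleteSet C δ) :
    ∀ p, IsBdry C p → ∃ p' ∈ C, hdist p p' = δ := by
  obtain ⟨hdiam, hcompl⟩ := hcomp
  obtain ⟨hconv, ⟨R, hR⟩, hclosed, hint⟩ := hC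
  intro p hp
  classical
  have hpC : p ∈ C := hp.1
  -- the diameter set
  set D : Set ℝ := {r | ∃ a ∈ C, ∃ b ∈ C, hdist a b = r} with hD
  have hbdd : BddAbove D := by
    refine ⟨R, ?_⟩
    rintro r ⟨a, ha, b, hb, rfl⟩
    exact hR a ha b hb
  have hδ0 : 0 ≤ δ := by
    have h0 : hdist p p ∈ D := ⟨p, hpC, p, hpC, rfl⟩
    have := le_csSup hbdd h0
    rw [hdist_self] at this
    rw [← hdiam]
    exact this
  have hdistle : ∀ a ∈ C, ∀ b ∈ C, hdist a b ≤ δ := by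
    intro a ha b hb
    rw [← hdiam]
    exact le_csSup hbdd ⟨a, ha, b, hb, rfl⟩
  -- the coordinate set
  set S : Set (EuclideanSpace ℝ (Fin (d + 1))) := (fun q : Pt d => q.1) '' C with hS
  have hSne : S.Nonempty := ⟨p.1, p, hpC, rfl⟩
  -- boundedness of S
  have hR0 : 0 ≤ R := by
    have := hR p hpC p hpC
    rw [hdist_self] at this
    linarith
  set Kp : ℝ := p.1 (Fin.last d) + Real.sqrt (p.1 (Fin.last d) ^ 2 - 1) with hKp
  have hKp0 : 0 < Kp := by
    have := last_ge_one p.2.1 p.2.2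
    have := Real.sqrt_nonneg (p.1 (Fin.last d) ^ 2 - 1)
    rw [hKp]; linarith
  set Kq : ℝ := Kp * Real.cosh R with hKq
  have hlastbound : ∀ q : Pt d, q ∈ C → q.1 (Fin.last d) ≤ Kq := by
    intro q hq
    have h1 : 1 ≤ -(mink d p.1 q.1) := one_le_neg_mink' p q
    have h2 : -(mink d p.1 q.1) = Real.cosh (hdist p q) := (cosh_arcosh h1).symm
    have h3 : Real.cosh (hdist p q) ≤ Real.cosh R := by
      rw [Real.cosh_le_cosh, abs_of_nonneg (hdist_nonneg p q), abs_of_nonneg hR0]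
      exact hR p hpC q hq
    have h4 := last_coord_bound p.2.1 p.2.2 q.2.1 q.2.2
    calc q.1 (Fin.last d) ≤ Kp * (-(mink d p.1 q.1)) := h4
      _ = Kp * Real.cosh (hdist p q) := by rw [h2]
      _ ≤ Kp * Real.cosh R := by
          exact mul_le_mul_of_nonneg_left h3 (le_of_lt hKp0)
  have hKq1 : 1 ≤ Kq := by
    have := hlastbound p hpC
    have := last_ge_one p.2.1 p.2.2
    linarith
  have hnormbound : ∀ x ∈ S, ‖x‖ ≤ Real.sqrt 2 * Kq := by
    rintro x ⟨q, hq, rfl⟩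
    have hlast := hlastbound q hq
    have hge1 := last_ge_one q.2.1 q.2.2
    rw [EuclideanSpace.norm_eq]
    have hsum : (∑ i : Fin (d + 1), ‖q.1 i‖ ^ 2) = 2 * q.1 (Fin.last d) ^ 2 - 1 := by
      rw [Fin.sum_univ_castSucc]
      have h1 : ∀ i : Fin (d + 1), ‖q.1 i‖ ^ 2 = q.1 i ^ 2 := fun i => sq_abs _
      rw [Finset.sum_congr rfl (fun i _ => h1 i.castSucc), h1 (Fin.last d), spatial_eq q.2.1]
      ring
    rw [hsum]
    have h2 : 2 * q.1 (Fin.last d) ^ 2 - 1 ≤ 2 * Kq ^ 2 := by nlinarith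
    calc Real.sqrt (2 * q.1 (Fin.last d) ^ 2 - 1) ≤ Real.sqrt (2 * Kq ^ 2) :=
          Real.sqrt_le_sqrt h2
      _ = Real.sqrt 2 * Kq := by
          rw [Real.sqrt_mul (by norm_num : (0:ℝ) ≤ 2), Real.sqrt_sq (by linarith)]
  -- S is compact
  have hSclosed : IsClosed S := by
    apply IsSeqClosed.isClosed
    intro xs l hxs hlim
    choose qn hqnC hqn using hxs
    have hlim' : ∀ n, xs n = (qn n).1 := fun n => (hqn n).symm
    have hquad : mink d l l = -1 := by
      have htend : Filter.Tendsto (fun n => mink d (xs n) (xs n)) Filter.atTop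
          (nhds (mink d l l)) :=
        (mink_continuous_diag.tendsto l).comp hlim
      have hconst : ∀ n, mink d (xs n) (xs n) = -1 := by
        intro n; rw [hlim' n]; exact (qn n).2.1
      have : Filter.Tendsto (fun _ : ℕ => (-1 : ℝ)) Filter.atTop (nhds (mink d l l)) := by
        rwa [show (fun n => mink d (xs n) (xs n)) = fun _ : ℕ => (-1:ℝ) from funext hconst]
          at htend
      exact tendsto_nhds_unique this tendsto_const_nhds
    have hlast : 1 ≤ l (Fin.last d) := by
      have htend : Filter.Tendsto (fun n => xs n (Fin.last d)) Filter.atTop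
          (nhds (l (Fin.last d))) :=
        ((PiLp.continuous_apply _ _ (Fin.last d)).tendsto l).comp hlim
      apply ge_of_tendsto htend
      filter_upwards with n
      rw [hlim' n]
      exact last_ge_one (qn n).2.1 (qn n).2.2
    set q : Pt d := ⟨l, hquad, lt_of_lt_of_le one_pos hlast⟩ with hqdef
    have hqC : q ∈ C := by
      apply hclosed
      intro ε hε
      have htend : Filter.Tendsto (fun n => hdist q (qn n)) Filter.atTop (nhds 0) := by
        have t1 : Filter.Tendsto (fun n => -(mink d l (xs n))) Filter.atTop
            (nhds (-(mink d l l))) :=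
          (((mink_continuous_right l).neg).tendsto l).comp hlim
        rw [hquad] at t1
        norm_num at t1
        have t2 : Filter.Tendsto arcosh (nhds 1) (nhds 0) := by
          have := continuousAt_arcosh (le_refl (1:ℝ))
          rw [← arcosh_one]
          exact this.tendsto
        have t3 := t2.comp t1
        have : (fun n => hdist q (qn n)) = (arcosh ∘ fun n => -(mink d l (xs n))) := by
          funext n
          show hdist q (qn n) = arcosh (-(mink d l (xs n)))
          rw [hlim' n]
          rfl
        rwa [this]
      have hev : ∀ᶠ n in Filter.atTop, hdist q (qn n) < ε := by
        have := htend (Metric.ball_mem_nhds (0:ℝ) hε)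
        filter_upwards [this] with n hn
        simp only [Set.mem_preimage, Metric.mem_ball, Real.dist_eq, sub_zero] at hn
        calc hdist q (qn n) ≤ |hdist q (qn n)| := le_abs_self _
          _ < ε := hn
      obtain ⟨n, hn⟩ := hev.exists
      exact ⟨qn n, hqnC n, hn⟩
    exact ⟨q, hqC, rfl⟩
  have hScompact : IsCompact S := by
    apply Metric.isCompact_of_isClosed_isBounded hSclosed
    rw [isBounded_iff_forall_norm_le]
    exact ⟨Real.sqrt 2 * Kq, hnormbound⟩
  -- the farthest point from p
  set f : EuclideanSpace ℝ (Fin (d + 1)) → ℝ := fun y => arcosh (-(mink d p.1 y)) with hf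
  have hfc : ContinuousOn f S := by
    rintro y ⟨q, hq, rfl⟩
    have h1 : 1 ≤ -(mink d p.1 q.1) := one_le_neg_mink' p q
    have hg : Continuous fun y : EuclideanSpace ℝ (Fin (d+1)) =>
        -(mink d p.1 y) + Real.sqrt ((-(mink d p.1 y)) ^ 2 - 1) :=
      ((mink_continuous_right p.1).neg).add
        ((((mink_continuous_right p.1).neg.pow 2).sub continuous_const).sqrt)
    have hgpos : -(mink d p.1 q.1) + Real.sqrt ((-(mink d p.1 q.1)) ^ 2 - 1) ≠ 0 :=
      ne_of_gt (sqrt_arg_pos h1)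
    have hca : ContinuousAt (fun y : EuclideanSpace ℝ (Fin (d+1)) =>
        Real.log (-(mink d p.1 y) + Real.sqrt ((-(mink d p.1 y)) ^ 2 - 1))) q.1 :=
      ContinuousAt.log hg.continuousAt hgpos
    exact hca.continuousWithinAt
  obtain ⟨x₀, hx₀S, hmax⟩ := hScompact.exists_isMaxOn hSne hfc
  obtain ⟨p', hp'C, hp'x⟩ := hx₀S
  set M : ℝ := hdist p p' with hM
  have hfmax : ∀ q : Pt d, q ∈ C → hdist p q ≤ M := by
    intro q hq
    have h := hmax ⟨q, hq, rfl⟩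
    simp only [Set.mem_setOf_eq] at h
    rw [← hp'x] at h
    exact h
  have hMδ : M ≤ δ := hdistle p hpC p' hp'C
  -- M = δ
  have hδM : δ ≤ M := by
    by_contra hlt
    push_neg at hlt
    have hni := hp.2
    unfold IsIntr at hni
    push_neg at hni
    obtain ⟨x, hx1, hx2⟩ := hni (δ - M) (by linarith)
    have hgt := hcompl x hx2
    have hle : diam (C ∪ {x}) ≤ δ := by
      unfold diam
      apply Real.sSup_le _ hδ0
      rintro r ⟨a, ha, b, hb, rfl⟩
      rcases ha with ha | ha <;> rcases hb with hb | hb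
      · exact hdistle a ha b hb
      · rw [Set.mem_singleton_iff] at hb
        subst hb
        calc hdist a b ≤ hdist a p + hdist p b := hdist_triangle a p b
          _ = hdist p a + hdist p b := by rw [hdist_comm a p]
          _ ≤ M + (δ - M) := add_le_add (hfmax a ha) (le_of_lt hx1)
          _ = δ := by ring
      · rw [Set.mem_singleton_iff] at ha
        subst ha
        calc hdist a b ≤ hdist a p + hdist p b := hdist_triangle a p b
          _ = hdist p a + hdist p b := by rw [hdist_comm a p]
          _ ≤ (δ - M) + M := add_le_add (le_of_lt hx1) (hfmax b hb)
          _ = δ := by ring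
      · rw [Set.mem_singleton_iff] at ha hb
        subst ha; subst hb
        rw [hdist_self]
        exact hδ0
    linarith
  exact ⟨p', hp'C, by linarith⟩


end HypSpace
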